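/- Let k ≥ 2 and let ρ_1, …, ρ_t be a finite family of non-empty relations on **k** (of arbitrary arities). Then there exists a partial function f on **k** that is neither a partial projection nor a partial constant function and that preserves every ρ_i, i = 1,…,t. Consequently, no finite family of relations on **k** is hereditarily strongly rigid. -/

import Mathlib

/-- An `n`-ary partial function on `Fin k`: a domain together with a value map
(values outside the domain are irrelevant). -/
structure PFunN (k n : ℕ) where
  Dom : Set (Fin n → Fin k)
  toFun : (Fin n → Fin k) → Fin k

/-- An `n`-ary partial function `f` preserves the `h`-ary relation `ρ` if for every
`h × n` matrix `M` all of whose columns are in `ρ` and all of whose rows are in the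
domain of `f`, the tuple of values of `f` on the rows belongs to `ρ`. -/
def PreservesN {k n h : ℕ} (f : PFunN k n) (ρ : Set (Fin h → Fin k)) : Prop :=
  ∀ M : Fin h → Fin n → Fin k,
    (∀ j : Fin n, (fun i => M i j) ∈ ρ) → (∀ i, M i ∈ f.Dom) →
      (fun i => f.toFun (M i)) ∈ ρ

/-- `f` is a partial projection: a subfunction of some projection `e_i^n`. -/
def IsPartialProjection {k n : ℕ} (f : PFunN k n) : Prop :=
  ∃ i : Fin n, ∀ x ∈ f.Dom, f.toFun x = x i

/-- `f` is a partial constant function: it does not take two distinct values. -/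
def IsPartialConstant {k n : ℕ} (f : PFunN k n) : Prop :=
  ∀ x ∈ f.Dom, ∀ y ∈ f.Dom, f.toFun x = f.toFun y

/-- The tuple `v_t^h ∈ 2^h` consisting of `t` ones followed by `h - t` zeros. -/
def vtuple (t h : ℕ) : Fin h → Fin 2 := fun i => if (i : ℕ) < t then 1 else 0

/-- The relation `Δ_t^h = 2^h \ {v_t^h}`. -/
def Delta (t h : ℕ) : Set (Fin h → Fin 2) := { v | v ≠ vtuple t h }

/-- For any finite family of non-empty relations on `Fin k` (`k ≥ 2`),
there is a partial function, neither a partial projection nor a partial constant,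
preserving all of them; consequently, no finite family is hereditarily strongly rigid. -/
theorem no_finite_hereditarily_strongly_rigid_family (k t : ℕ) (hk : 2 ≤ k)
    (a : Fin t → ℕ) (ha : ∀ i, 1 ≤ a i)
    (ρ : ∀ i : Fin t, Set (Fin (a i) → Fin k)) (hne : ∀ i, (ρ i).Nonempty) :
    (∃ n : ℕ, ∃ f : PFunN k n, ¬ IsPartialProjection f ∧ ¬ IsPartialConstant f ∧
        ∀ i : Fin t, PreservesN f (ρ i)) ∧
      ¬ (∀ (n : ℕ) (g : PFunN k n), (∀ i : Fin t, PreservesN g (ρ i)) →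
          IsPartialProjection g ∨ IsPartialConstant g) := by
  have hmain : ∃ n : ℕ, ∃ f : PFunN k n, ¬ IsPartialProjection f ∧ ¬ IsPartialConstant f ∧
      ∀ i : Fin t, PreservesN f (ρ i) := by
    set m : ℕ := 3 + Finset.univ.sup a with hmdef
    have hm3 : 3 ≤ m := Nat.le_add_right 3 _
    have ham : ∀ i, a i < m := by
      intro i
      have := Finset.le_sup (f := a) (Finset.mem_univ i)
      omega
    set z : Fin k := ⟨0, by omega⟩ with hz
    set o : Fin k := ⟨1, hk⟩ with ho
    have hzo : z ≠ o := by
      intro h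
      have := congrArg Fin.val h
      simp [hz, ho] at this
    -- the intended values
    set c : Fin m → Fin k := fun s => if (s : ℕ) = 0 then o else z with hc
    -- the domain points
    set p : Fin m → Fin m → Fin k :=
      fun s j => if s = j then (if (s : ℕ) = 0 then z else o) else c s with hp
    set s0 : Fin m := ⟨0, by omega⟩ with hs0
    have hpc : ∀ s j : Fin m, s ≠ j → p s j = c s := by
      intro s j h; simp [hp, h]
    have hpd : ∀ s : Fin m, p s s = if (s : ℕ) = 0 then z else o := by
      intro s; simp [hp]
    -- p s ≠ p s0 for s ≠ s0
    have hpne0 : ∀ s : Fin m, (s : ℕ) ≠ 0 → p s ≠ p s0 := by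
      intro s hs h
      have hjlt : (if (s : ℕ) = 1 then 2 else 1) < m := by split <;> omega
      set j : Fin m := ⟨if (s : ℕ) = 1 then 2 else 1, hjlt⟩ with hj
      have hjs : s ≠ j := by
        intro he
        have := congrArg Fin.val he
        simp [hj] at this
        split at this <;> omega
      have hj0 : s0 ≠ j := by
        intro he
        have := congrArg Fin.val he
        simp [hj, hs0] at this
        split at this <;> omega
      have h1 := congrFun h j
      rw [hpc s j hjs, hpc s0 j hj0] at h1
      have hs' : ¬ s = 0 := by simpa using hs
      simp [hc, hs, hs', hs0] at h1
      exact hzo h1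
    refine ⟨m, ⟨Set.range p, fun v => if v = p s0 then o else z⟩, ?_, ?_, ?_⟩
    all_goals {
      have hfval : ∀ s : Fin m,
          (if p s = p s0 then o else z) = c s := by
        intro s
        by_cases hs : (s : ℕ) = 0
        · have : s = s0 := by
            apply Fin.ext; simp [hs0, hs]
          simp [this, hc, hs0]
        · have hs' : ¬ s = 0 := by simpa using hs
          simp [hpne0 s hs, hc, hs, hs']
      first
      | -- not a partial projection
        (rintro ⟨j, hj⟩
         have h1 := hj (p j) ⟨j, rfl⟩
         simp only [hfval j, hpd j] at h1
         by_cases hj0 : (j : ℕ) = 0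
         · have hj0' : j = 0 := by simpa using hj0
           simp [hc, hj0, hj0'] at h1; exact hzo h1.symm
         · have hj0' : ¬ j = 0 := by simpa using hj0
           simp [hc, hj0, hj0'] at h1; exact hzo h1)
      | -- not a partial constant
        (intro hconst
         have hs1lt : (1 : ℕ) < m := by omega
         set s1 : Fin m := ⟨1, hs1lt⟩ with hs1
         have h1 := hconst (p s0) ⟨s0, rfl⟩ (p s1) ⟨s1, rfl⟩
         simp only [hfval s0, hfval s1] at h1
         simp [hc, hs0, hs1] at h1
         exact hzo h1.symm)
      | -- preserves each relation
        (intro i M hcol hrow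
         have hrow' : ∀ r, ∃ s, p s = M r := hrow
         choose φ hφ using hrow'
         have hnsurj : ¬ Function.Surjective φ := by
           intro hs
           have := Fintype.card_le_of_surjective φ hs
           simp at this
           have := ham i
           omega
         rw [Function.Surjective] at hnsurj
         push_neg at hnsurj
         obtain ⟨sstar, hsstar⟩ := hnsurj
         have key : (fun r => (if M r = p s0 then o else z)) = fun r => M r sstar := by
           funext r
           rw [← hφ r, hfval (φ r), hpc (φ r) sstar (fun h => hsstar r h)]
         simpa [PFunN.toFun] using key ▸ hcol sstar)
    }
  refine ⟨hmain, ?_⟩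
  intro H
  obtain ⟨n, f, h1, h2, h3⟩ := hmain
  exact (H n f h3).elim h1 h2
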